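/- arXiv:1006.5523 — 6 statements merged into one kernel-verified Lean document; each statement's English description precedes it below -/
import Mathlib

section
/- For all real numbers y, z ≥ 0 and every real k ≥ 2, one has (y + z)^{k/2} - y^{k/2} - z^{k/2} ≤ 2^{k/2} (y^{(k-1)/2} z^{1/2} + y^{1/2} z^{(k-1)/2}). -/
open Real

lemma povzner_aux (y z p : ℝ) (hz : 0 ≤ z) (hzy : z ≤ y) (hp : 1 ≤ p) :
    (y + z) ^ p - y ^ p - z ^ p ≤ 2 ^ p * (y ^ (p - 1/2) * z ^ ((1:ℝ)/2)) := by
  have hy : 0 ≤ y := hz.trans hzy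
  have hp0 : 0 < p := lt_of_lt_of_le one_pos hp
  rcases eq_or_lt_of_le hy with hy0 | hy0
  · have hz0 : z = 0 := le_antisymm (hzy.trans_eq hy0.symm) hz
    subst hz0
    rw [← hy0]
    simp [Real.zero_rpow hp0.ne']
  · set t : ℝ := z / y with ht
    have hyne : y ≠ 0 := hy0.ne'
    have ht0 : 0 ≤ t := div_nonneg hz hy
    have ht1 : t ≤ 1 := div_le_one_of_le₀ hzy hy
    have hty : t * y = z := div_mul_cancel₀ z hyne
    have key := (convexOn_rpow hp).2 (x := y) (y := 2 * y)
      (Set.mem_Ici.2 hy) (Set.mem_Ici.2 (by linarith)) (sub_nonneg.2 ht1) ht0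
      (by ring)
    simp only [smul_eq_mul] at key
    have heq : (1 - t) * y + t * (2 * y) = y + z := by
      have : (1 - t) * y + t * (2 * y) = y + t * y := by ring
      rw [this, hty]
    rw [heq] at key
    have h2y : (2 * y) ^ p = 2 ^ p * y ^ p := Real.mul_rpow (by norm_num) hy
    rw [h2y] at key
    -- key : (y+z)^p ≤ (1-t) * y^p + t * (2^p * y^p)
    have hty' : t * y ^ p = z * y ^ (p - 1) := by
      have h := Real.rpow_add hy0 1 (p - 1)
      rw [show (1:ℝ) + (p - 1) = p by ring, Real.rpow_one] at h
      rw [h, ← hty]; ring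
    have hzhalf : z * y ^ (p - 1) ≤ z ^ ((1:ℝ)/2) * y ^ (p - 1/2) := by
      have hz2 : z = z ^ ((1:ℝ)/2) * z ^ ((1:ℝ)/2) := by
        rw [← Real.rpow_add_of_nonneg hz (by norm_num) (by norm_num)]
        norm_num
      have hle : z ^ ((1:ℝ)/2) ≤ y ^ ((1:ℝ)/2) :=
        Real.rpow_le_rpow hz hzy (by norm_num)
      have hy2 : y ^ ((1:ℝ)/2) * y ^ (p - 1) = y ^ (p - 1/2) := by
        rw [← Real.rpow_add hy0, show (1:ℝ)/2 + (p - 1) = p - 1/2 by ring]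
      calc z * y ^ (p - 1) = z ^ ((1:ℝ)/2) * z ^ ((1:ℝ)/2) * y ^ (p - 1) := by
            rw [← hz2]
        _ ≤ z ^ ((1:ℝ)/2) * y ^ ((1:ℝ)/2) * y ^ (p - 1) := by
            have h1 : (0:ℝ) ≤ z ^ ((1:ℝ)/2) := Real.rpow_nonneg hz _
            have h2 : (0:ℝ) ≤ y ^ (p - 1) := Real.rpow_nonneg hy _
            exact mul_le_mul_of_nonneg_right
              (mul_le_mul_of_nonneg_left hle h1) h2
        _ = z ^ ((1:ℝ)/2) * y ^ (p - 1/2) := by rw [mul_assoc, hy2]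
    have hyp : (0:ℝ) ≤ y ^ p := Real.rpow_nonneg hy _
    have hzp : (0:ℝ) ≤ z ^ p := Real.rpow_nonneg hz _
    have h2p : (1:ℝ) ≤ 2 ^ p := Real.one_le_rpow (by norm_num) hp0.le
    have hprod : (0:ℝ) ≤ z * y ^ (p - 1) :=
      mul_nonneg hz (Real.rpow_nonneg hy _)
    nlinarith [key, hty', hzhalf, hzp]

theorem povzner_elementary_power_inequality (y z k : ℝ) (hy : 0 ≤ y) (hz : 0 ≤ z)
    (hk : 2 ≤ k) :
    (y + z) ^ (k / 2) - y ^ (k / 2) - z ^ (k / 2) ≤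
      2 ^ (k / 2) * (y ^ ((k - 1) / 2) * z ^ ((1 : ℝ) / 2)
        + y ^ ((1 : ℝ) / 2) * z ^ ((k - 1) / 2)) := by
  have hp : (1:ℝ) ≤ k / 2 := by linarith
  have hexp : (k - 1) / 2 = k / 2 - 1/2 := by ring
  have h2p : (0:ℝ) ≤ 2 ^ (k/2) := Real.rpow_nonneg (by norm_num) _
  rcases le_total z y with hzy | hyz
  · have h := povzner_aux y z (k/2) hz hzy hp
    rw [hexp]
    have hnn : (0:ℝ) ≤ y ^ ((1:ℝ)/2) * z ^ (k/2 - 1/2) :=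
      mul_nonneg (Real.rpow_nonneg hy _) (Real.rpow_nonneg hz _)
    nlinarith [mul_nonneg h2p hnn]
  · have h := povzner_aux z y (k/2) hy hyz hp
    rw [add_comm z y] at h
    rw [hexp]
    have hnn : (0:ℝ) ≤ y ^ (k/2 - 1/2) * z ^ ((1:ℝ)/2) :=
      mul_nonneg (Real.rpow_nonneg hy _) (Real.rpow_nonneg hz _)
    nlinarith [mul_nonneg h2p hnn]
end

section
/- For every β ∈ (0, 2) there exists η ∈ (0, 1) such that for all x ∈ [0, 1/√2], x^β + (1 - x^2)^{β/2} - 1 ≥ η x^β. -/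
theorem stretched_exponent_elementary_inequality (β : ℝ) (hβ0 : 0 < β) (hβ2 : β < 2) :
    ∃ η : ℝ, η ∈ Set.Ioo (0 : ℝ) 1 ∧
      ∀ x ∈ Set.Icc (0 : ℝ) (1 / Real.sqrt 2),
        η * x ^ β ≤ x ^ β + (1 - x ^ 2) ^ (β / 2) - 1 := by
  have hs2 : (1 : ℝ) < Real.sqrt 2 := by
    nlinarith [Real.sq_sqrt (by norm_num : (0:ℝ) ≤ 2), Real.sqrt_nonneg 2]
  have hbase0 : (0:ℝ) < 1 / Real.sqrt 2 := by positivity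
  have hbase1 : 1 / Real.sqrt 2 < 1 := by
    rw [div_lt_one (by linarith)]; exact hs2
  set c := (1 / Real.sqrt 2) ^ (2 - β) with hc
  have hc0 : 0 < c := Real.rpow_pos_of_pos hbase0 _
  have hc1 : c < 1 := Real.rpow_lt_one hbase0.le hbase1 (by linarith)
  refine ⟨1 - c, ⟨by linarith, by linarith⟩, ?_⟩
  rintro x ⟨hx0, hx1⟩
  have hx2 : x ^ 2 ≤ 1 / 2 := by
    have h : x ^ 2 ≤ (1 / Real.sqrt 2) ^ 2 := by nlinarith
    rwa [div_pow, one_pow, Real.sq_sqrt (by norm_num : (0:ℝ) ≤ 2)] at h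
  have h1 : 1 - x ^ 2 ≤ (1 - x ^ 2) ^ (β / 2) := by
    have h01 : 0 < 1 - x ^ 2 := by linarith
    calc 1 - x ^ 2 = (1 - x ^ 2) ^ (1:ℝ) := (Real.rpow_one _).symm
      _ ≤ (1 - x ^ 2) ^ (β / 2) :=
        Real.rpow_le_rpow_of_exponent_ge h01 (by nlinarith) (by linarith)
  have h2' : x ^ 2 ≤ c * x ^ β := by
    rcases eq_or_lt_of_le hx0 with h0 | h0
    · simp [← h0, Real.zero_rpow (ne_of_gt hβ0)]
    · have hsplit : x ^ (2:ℝ) = x ^ β * x ^ (2 - β) := by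
        rw [← Real.rpow_add h0]; ring_nf
      have hle : x ^ (2 - β) ≤ c := Real.rpow_le_rpow hx0 hx1 (by linarith)
      calc x ^ 2 = x ^ (2:ℝ) := by
            rw [← Real.rpow_natCast x 2]; norm_num
        _ = x ^ β * x ^ (2 - β) := hsplit
        _ ≤ x ^ β * c :=
            mul_le_mul_of_nonneg_left hle (Real.rpow_nonneg hx0 _)
        _ = c * x ^ β := mul_comm _ _
  linarith
end

section
/- Let X(t) ≥ 0 be a C^1 function on [0,1] satisfying X'(t) ≤ -2K Y^{-4/d} X(t)^{1 + 2/d} + 2b X(t) for constants K, b, Y > 0 and integer d ≥ 1. Then for all t ∈ (0, 1], X(t) ≤ max{ (d/(2K Y^{-4/d} t))^{d/2}, e^{2bt} (2b/K)^{d/2} Y^2 }. -/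
open Set

lemma mono_aux {f f' : ℝ → ℝ} {a b : ℝ} (hab : a ≤ b)
    (hf : ∀ u ∈ Icc a b, HasDerivAt f (f' u) u)
    (hf' : ∀ u ∈ Icc a b, 0 ≤ f' u) : f a ≤ f b := by
  have hmono : MonotoneOn f (Icc a b) := by
    apply monotoneOn_of_deriv_nonneg (convex_Icc a b)
    · exact fun u hu => (hf u hu).continuousAt.continuousWithinAt
    · intro u hu
      rw [interior_Icc] at hu
      exact ((hf u (Ioo_subset_Icc_self hu)).differentiableAt).differentiableWithinAt
    · intro u hu
      rw [interior_Icc] at hu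
      rw [(hf u (Ioo_subset_Icc_self hu)).deriv]
      exact hf' u (Ioo_subset_Icc_self hu)
  exact hmono (left_mem_Icc.2 hab) (right_mem_Icc.2 hab) hab

lemma anti_aux {f f' : ℝ → ℝ} {a b : ℝ} (hab : a ≤ b)
    (hf : ∀ u ∈ Icc a b, HasDerivAt f (f' u) u)
    (hf' : ∀ u ∈ Icc a b, f' u ≤ 0) : f b ≤ f a := by
  have := mono_aux (f := fun u => -f u) (f' := fun u => -f' u) hab
    (fun u hu => (hf u hu).neg) (fun u hu => neg_nonneg.2 (hf' u hu))
  simpa using this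

theorem nash_differential_inequality (d : ℕ) (hd : 1 ≤ d)
    (K b Y : ℝ) (hK : 0 < K) (hb : 0 < b) (hY : 0 < Y)
    (X X' : ℝ → ℝ)
    (hX : ∀ t ∈ Set.Icc (0:ℝ) 1, HasDerivAt X (X' t) t)
    (hXpos : ∀ t ∈ Set.Icc (0:ℝ) 1, 0 ≤ X t)
    (hineq : ∀ t ∈ Set.Icc (0:ℝ) 1,
      X' t ≤ -2 * K * Y ^ (-(4:ℝ) / d) * X t ^ (1 + 2 / (d:ℝ)) + 2 * b * X t) :
    ∀ t ∈ Set.Ioc (0:ℝ) 1,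
      X t ≤ max (((d : ℝ) / (2 * K * Y ^ (-(4:ℝ) / d) * t)) ^ ((d:ℝ) / 2))
        (Real.exp (2 * b * t) * (2 * b / K) ^ ((d:ℝ) / 2) * Y ^ 2) := by
  intro t ht
  obtain ⟨ht0, ht1⟩ := ht
  have hd0 : (0:ℝ) < d := by exact_mod_cast Nat.lt_of_lt_of_le Nat.zero_lt_one hd
  have hYp : (0:ℝ) < Y ^ (-(4:ℝ)/d) := Real.rpow_pos_of_pos hY _
  set c : ℝ := 2 * K * Y ^ (-(4:ℝ) / d) with hc_def
  have hc : 0 < c := by positivity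
  set M : ℝ := (2 * b / K) ^ ((d:ℝ)/2) * Y ^ 2 with hM_def
  have hM : 0 < M := by positivity
  have hsub : Icc (0:ℝ) t ⊆ Icc (0:ℝ) 1 := Icc_subset_Icc le_rfl ht1
  by_cases hcase : ∀ u ∈ Icc (0:ℝ) t, M < X u
  · -- everywhere above threshold: algebraic decay
    have hMc : c * M ^ ((2:ℝ)/d) = 4 * b := by
      have h1 : M ^ ((2:ℝ)/d) = (2*b/K) * Y ^ ((4:ℝ)/d) := by
        rw [hM_def, Real.mul_rpow (by positivity) (by positivity),
            ← Real.rpow_natCast Y 2,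
            ← Real.rpow_mul (by positivity : (0:ℝ) ≤ 2*b/K),
            ← Real.rpow_mul hY.le]
        congr 1
        · field_simp
          simp only [Real.rpow_one]
          field_simp
        · congr 1
          push_cast
          ring
      have h2 : Y ^ (-(4:ℝ)/d) * Y ^ ((4:ℝ)/d) = 1 := by
        rw [← Real.rpow_add hY, show -(4:ℝ)/d + (4:ℝ)/d = 0 by ring, Real.rpow_zero]
      rw [h1, hc_def]
      field_simp
      have h2' : Y ^ (-((4:ℝ)/d)) * Y ^ ((4:ℝ)/d) = 1 := by rw [← neg_div]; exact h2
      linear_combination 4 * h2'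
    -- refined differential inequality
    have hX'2 : ∀ u ∈ Icc (0:ℝ) t, X' u ≤ -(c/2) * X u ^ (1 + 2/(d:ℝ)) := by
      intro u hu
      have hXu : M < X u := hcase u hu
      have hXup : 0 < X u := lt_trans hM hXu
      have h3 : M ^ ((2:ℝ)/d) ≤ X u ^ ((2:ℝ)/d) :=
        Real.rpow_le_rpow hM.le hXu.le (by positivity)
      have h4 : 4 * b ≤ c * X u ^ ((2:ℝ)/d) := by
        rw [← hMc]; exact mul_le_mul_of_nonneg_left h3 hc.le
      have h5 : X u ^ ((2:ℝ)/d) * X u = X u ^ (1 + 2/(d:ℝ)) := by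
        nth_rewrite 2 [← Real.rpow_one (X u)]
        rw [← Real.rpow_add hXup]; ring_nf
      have h6 : 2 * b * X u ≤ (c/2) * X u ^ (1 + 2/(d:ℝ)) := by
        rw [← h5]
        nlinarith [mul_le_mul_of_nonneg_right h4 hXup.le]
      have h7 := hineq u (hsub hu)
      have hcc : -2 * K * Y ^ (-(4:ℝ)/d) = -c := by rw [hc_def]; ring
      rw [hcc] at h7
      linarith
    -- monotone function g(u) - (c/d) u where g = X^{-2/d}
    have key : c/(d:ℝ) * t ≤ X t ^ (-(2:ℝ)/d) := by
      have hmono := mono_aux (a := 0) (b := t)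
        (f := fun u => X u ^ (-(2:ℝ)/(d:ℝ)) - c/(d:ℝ) * u)
        (f' := fun u => -(2:ℝ)/(d:ℝ) * X u ^ (-(2:ℝ)/(d:ℝ) - 1) * X' u - c/(d:ℝ))
        ht0.le
        (fun u hu => by
          have h1 := (hX u (hsub hu)).rpow_const (p := -(2:ℝ)/(d:ℝ))
            (Or.inl (ne_of_gt (lt_trans hM (hcase u hu))))
          have h2 : HasDerivAt (fun u : ℝ => c/(d:ℝ) * u) (c/(d:ℝ)) u := by
            simpa using (hasDerivAt_id u).const_mul (c/(d:ℝ))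
          refine (h1.sub h2).congr_deriv ?_
          ring)
        (fun u hu => by
          have hXup : 0 < X u := lt_trans hM (hcase u hu)
          set p := X u ^ (-(2:ℝ)/(d:ℝ) - 1) with hp_def
          have hp : 0 < p := Real.rpow_pos_of_pos hXup _
          have hprod : p * X u ^ (1 + 2/(d:ℝ)) = 1 := by
            rw [hp_def, ← Real.rpow_add hXup,
              show -(2:ℝ)/(d:ℝ) - 1 + (1 + 2/(d:ℝ)) = 0 by ring, Real.rpow_zero]
          have h1 : p * X' u ≤ -(c/2) := by
            have := mul_le_mul_of_nonneg_left (hX'2 u hu) hp.le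
            nlinarith [this, hprod]
          have hneg : -(2:ℝ)/(d:ℝ) ≤ 0 :=
            div_nonpos_of_nonpos_of_nonneg (by norm_num) hd0.le
          have h2 := mul_le_mul_of_nonpos_left h1 hneg
          have h3 : -(2:ℝ)/(d:ℝ) * -(c/2) = c/(d:ℝ) := by
            field_simp
          nlinarith [h2, h3])
      have hg0 : 0 < X 0 ^ (-(2:ℝ)/(d:ℝ)) :=
        Real.rpow_pos_of_pos (lt_trans hM (hcase 0 (left_mem_Icc.2 ht0.le))) _
      linarith
    -- conclude
    have hctd : 0 < c/(d:ℝ) * t := by positivity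
    have h7 := Real.rpow_le_rpow_of_nonpos hctd key
      (by
        have : (0:ℝ) < (d:ℝ)/2 := by positivity
        linarith : -((d:ℝ)/2) ≤ 0)
    have hXtpos : 0 < X t := lt_trans hM (hcase t (right_mem_Icc.2 ht0.le))
    have h8 : (X t ^ (-(2:ℝ)/(d:ℝ))) ^ (-((d:ℝ)/2)) = X t := by
      rw [← Real.rpow_mul hXtpos.le,
        show -(2:ℝ)/(d:ℝ) * -((d:ℝ)/2) = 1 by field_simp, Real.rpow_one]
    have h9 : (c/(d:ℝ) * t) ^ (-((d:ℝ)/2)) = ((d:ℝ)/(c*t)) ^ ((d:ℝ)/2) := by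
      rw [Real.rpow_neg hctd.le, ← Real.inv_rpow hctd.le]
      congr 1
      field_simp
    rw [h8, h9] at h7
    exact le_max_of_le_left h7
  · -- some point below threshold: Gronwall
    push_neg at hcase
    obtain ⟨s, hs, hXs⟩ := hcase
    have hsub2 : Icc s t ⊆ Icc (0:ℝ) 1 := Icc_subset_Icc hs.1 ht1
    have hanti := anti_aux (a := s) (b := t)
      (f := fun u => Real.exp (-(2*b*u)) * X u)
      (f' := fun u => Real.exp (-(2*b*u)) * -(2*b) * X u + Real.exp (-(2*b*u)) * X' u)
      hs.2
      (fun u hu => by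
        have hE : HasDerivAt (fun u : ℝ => Real.exp (-(2*b*u))) (Real.exp (-(2*b*u)) * -(2*b)) u := by
          simpa using ((hasDerivAt_id u).const_mul (-(2*b))).exp
        exact hE.mul (hX u (hsub2 hu)))
      (fun u hu => by
        have h1 := hineq u (hsub2 hu)
        have h2 : (0:ℝ) ≤ X u := hXpos u (hsub2 hu)
        have h3 : (0:ℝ) ≤ 2 * K * Y ^ (-(4:ℝ)/d) * X u ^ (1 + 2/(d:ℝ)) := by positivity
        have h4 : (0:ℝ) < Real.exp (-(2*b*u)) := Real.exp_pos _
        have h5 : X' u ≤ 2 * b * X u := by linarith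
        nlinarith [mul_le_mul_of_nonneg_left h5 h4.le])
    have h2 : Real.exp (2*b*t) * (Real.exp (-(2*b*t)) * X t) = X t := by
      rw [← mul_assoc, ← Real.exp_add, show 2*b*t + -(2*b*t) = 0 by ring,
        Real.exp_zero, one_mul]
    have hexp : Real.exp (-(2*b*s)) ≤ 1 := by
      rw [Real.exp_le_one_iff]
      nlinarith [hs.1, hb]
    have hXt : X t ≤ Real.exp (2*b*t) * M := by
      have h1 : Real.exp (-(2*b*t)) * X t ≤ Real.exp (-(2*b*s)) * M :=
        le_trans hanti (mul_le_mul_of_nonneg_left hXs (Real.exp_pos _).le)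
      have h3 : Real.exp (-(2*b*s)) * M ≤ M :=
        by nlinarith [hexp, hM]
      calc X t = Real.exp (2*b*t) * (Real.exp (-(2*b*t)) * X t) := h2.symm
      _ ≤ Real.exp (2*b*t) * M := by
          apply mul_le_mul_of_nonneg_left _ (Real.exp_pos _).le
          linarith
    refine le_max_of_le_right ?_
    rw [hM_def] at hXt
    linarith [hXt]
end

section
/- Let φ(v) = |v|^γ for |v| large with γ ≥ 1, and let m(v) = exp(κ|v|^β) with κ > 0 and 2 - γ ≤ β < γ, p ∈ [1,2]. Define ψ_{m,p} = (p-1)|∇m|^2/m^2 + Δm/m + (1 - 1/p) Δφ - ∇φ · ∇m/m (for F = ∇φ). Then as |v| → ∞, ψ_{m,p}(v) ≈ p κ^2 β^2 |v|^{2β-2} - κβγ |v|^{β+γ-2}; in particular if β + γ > 2 and β < γ then limsup_{|v|→∞} ψ_{m,p}(v) = -∞, and if β = 2 - γ then limsup_{|v|→∞} ψ_{m,p}(v) = -κβγ. -/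
open Real Filter Topology

lemma hasDerivAt_P (c : ℝ) (s : ℝ) (hs : 0 < s) :
    HasDerivAt (fun s : ℝ => s ^ c) (c * s ^ (c-1)) s :=
  Real.hasDerivAt_rpow_const (Or.inl hs.ne')

lemma hasDerivAt_P' (c : ℝ) (s : ℝ) (hs : 0 < s) :
    HasDerivAt (fun s : ℝ => c * s ^ (c-1)) (c * ((c-1) * s ^ (c-2))) s := by
  have h := (hasDerivAt_P (c-1) s hs).const_mul c
  rw [show c-1-1 = c-2 by ring] at h
  exact h

lemma hasDerivAt_Fm (κ β : ℝ) (s : ℝ) (hs : 0 < s) :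
    HasDerivAt (fun s : ℝ => Real.exp (κ * s ^ (β/2)))
      (Real.exp (κ * s ^ (β/2)) * (κ * ((β/2) * s ^ (β/2-1)))) s := by
  have h1 : HasDerivAt (fun s : ℝ => κ * s ^ (β/2)) (κ * ((β/2) * s ^ (β/2-1))) s :=
    (hasDerivAt_P (β/2) s hs).const_mul κ
  exact (Real.hasDerivAt_exp (κ * s ^ (β/2))).comp s h1

lemma hasDerivAt_Fm' (κ β : ℝ) (s : ℝ) (hs : 0 < s) :
    HasDerivAt (fun s : ℝ => Real.exp (κ * s ^ (β/2)) * (κ * ((β/2) * s ^ (β/2-1))))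
      (Real.exp (κ * s ^ (β/2)) * (κ * ((β/2) * s ^ (β/2-1)))^2
        + Real.exp (κ * s ^ (β/2)) * (κ * ((β/2) * ((β/2-1) * s ^ (β/2-2))))) s := by
  have h2 : HasDerivAt (fun s : ℝ => κ * ((β/2) * s ^ (β/2-1)))
      (κ * ((β/2) * ((β/2-1) * s ^ (β/2-2)))) s :=
    ((hasDerivAt_P' (β/2) s hs).const_mul κ).congr_deriv (by ring)
  have h3 := (hasDerivAt_Fm κ β s hs).mul h2
  have heq : Real.exp (κ * s ^ (β/2)) * (κ * ((β/2) * s ^ (β/2-1)))^2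
        + Real.exp (κ * s ^ (β/2)) * (κ * ((β/2) * ((β/2-1) * s ^ (β/2-2))))
      = Real.exp (κ * s ^ (β/2)) * (κ * ((β/2) * s ^ (β/2-1))) * (κ * ((β/2) * s ^ (β/2-1)))
        + Real.exp (κ * s ^ (β/2)) * (κ * ((β/2) * ((β/2-1) * s ^ (β/2-2)))) := by ring
  rw [heq]
  exact h3

lemma sq_rpow_half (r : ℝ) (hr : 0 ≤ r) (s : ℝ) : (r^2) ^ (s/2) = r ^ s := by
  rw [← Real.rpow_natCast r 2, ← Real.rpow_mul hr]
  rw [show ((2:ℕ):ℝ) * (s/2) = s by push_cast; ring]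



lemma aux_deriv2 (F F' F'' : ℝ → ℝ) (a b : ℝ) (ha : 0 < a)
    (hF : ∀ s, 0 < s → HasDerivAt F (F' s) s)
    (hF' : ∀ s, 0 < s → HasDerivAt F' (F'' s) s) :
    iteratedDeriv 2 (fun t : ℝ => F (a + 2*b*t + t^2)) 0
      = F'' a * (2*b)^2 + F' a * 2 := by
  set q : ℝ → ℝ := fun t => a + 2*b*t + t^2 with hqdef
  have hq : ∀ t : ℝ, HasDerivAt q (2*b + 2*t) t := by
    intro t
    have h1 : HasDerivAt (fun t : ℝ => a + 2*b*t) (2*b) t := by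
      simpa using ((hasDerivAt_id t).const_mul (2*b)).const_add a
    have h2 : HasDerivAt (fun t : ℝ => t^2) (2*t) t := by
      simpa using hasDerivAt_pow 2 t
    exact h1.add h2
  have hqc : Continuous q := by fun_prop
  have hT : IsOpen {t : ℝ | 0 < q t} := isOpen_lt continuous_const hqc
  have h0 : (0:ℝ) ∈ {t : ℝ | 0 < q t} := by
    simp only [Set.mem_setOf_eq, hqdef]; norm_num; exact ha
  have hmem : {t : ℝ | 0 < q t} ∈ nhds (0:ℝ) := hT.mem_nhds h0
  have heq : deriv (fun t => F (q t)) =ᶠ[nhds (0:ℝ)]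
      fun t => F' (q t) * (2*b + 2*t) := by
    refine Filter.eventuallyEq_of_mem hmem fun t ht => ?_
    exact ((hF (q t) ht).comp t (hq t)).deriv
  have hq0 : q 0 = a := by simp [hqdef]
  have hA : HasDerivAt (fun t => F' (q t)) (F'' (q 0) * (2*b + 2*0)) 0 :=
    (hF' (q 0) h0).comp 0 (hq 0)
  have hB : HasDerivAt (fun t : ℝ => 2*b + 2*t) 2 0 := by
    simpa using ((hasDerivAt_id (0:ℝ)).const_mul 2).const_add (2*b)
  have h2 : HasDerivAt (fun t => F' (q t) * (2*b + 2*t))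
      ((F'' (q 0) * (2*b + 2*0)) * (2*b + 2*0) + F' (q 0) * 2) 0 := hA.mul hB
  have : iteratedDeriv 2 (fun t : ℝ => F (q t)) 0
      = deriv (deriv (fun t : ℝ => F (q t))) 0 := by
    rw [show (2:ℕ) = 1 + 1 from rfl, iteratedDeriv_succ, iteratedDeriv_one]
  rw [this, heq.deriv_eq, h2.deriv, hq0]
  ring

/-- The Laplacian of a scalar function on Euclidean space, defined as the sum of
second derivatives along the coordinate directions. -/
noncomputable def euclideanLaplacian {d : ℕ} (f : EuclideanSpace ℝ (Fin d) → ℝ)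
    (v : EuclideanSpace ℝ (Fin d)) : ℝ :=
  ∑ i : Fin d, iteratedDeriv 2 (fun t : ℝ => f (v + t • EuclideanSpace.single i 1)) 0

lemma norm_line_sq {d : ℕ} (v : EuclideanSpace ℝ (Fin d)) (i : Fin d) (t : ℝ) :
    ‖v + t • EuclideanSpace.single i (1:ℝ)‖^2 = ‖v‖^2 + 2*(v i)*t + t^2 := by
  rw [norm_add_sq_real]
  have h1 : (inner ℝ v (t • EuclideanSpace.single i (1:ℝ)) : ℝ) = t * v i := by
    rw [real_inner_smul_right, EuclideanSpace.inner_single_right]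
    simp
  have h2 : ‖t • EuclideanSpace.single i (1:ℝ)‖^2 = t^2 := by
    rw [norm_smul, EuclideanSpace.norm_single, mul_pow, Real.norm_eq_abs, sq_abs]
    simp
  rw [h1, h2]; ring

lemma iteratedDeriv2_congr {f g : ℝ → ℝ} (h : f =ᶠ[nhds (0:ℝ)] g) :
    iteratedDeriv 2 f 0 = iteratedDeriv 2 g 0 := by
  rw [show (2:ℕ) = 1 + 1 from rfl, iteratedDeriv_succ, iteratedDeriv_one,
    iteratedDeriv_succ, iteratedDeriv_one]
  exact h.deriv.deriv_eq

lemma sum_coord_sq {d : ℕ} (v : EuclideanSpace ℝ (Fin d)) :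
    ∑ i, (v i)^2 = ‖v‖^2 := by
  rw [EuclideanSpace.norm_eq, Real.sq_sqrt (by positivity)]
  simp [Real.norm_eq_abs, sq_abs]

lemma grad_eq {d : ℕ} (F F' : ℝ → ℝ) (hF : ∀ s, 0 < s → HasDerivAt F (F' s) s)
    (f : EuclideanSpace ℝ (Fin d) → ℝ) (v : EuclideanSpace ℝ (Fin d)) (hv : 0 < ‖v‖)
    (hf : f =ᶠ[nhds v] fun w => F (‖w‖^2)) :
    gradient f v = (2 * F' (‖v‖^2)) • v := by
  have hN : HasFDerivAt (fun w : EuclideanSpace ℝ (Fin d) => ‖w‖^2)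
      (2 • (innerSL ℝ v)) v := (hasStrictFDerivAt_norm_sq v).hasFDerivAt
  have ha : 0 < ‖v‖^2 := pow_pos hv 2
  have hc : HasFDerivAt (fun w : EuclideanSpace ℝ (Fin d) => F (‖w‖^2))
      (F' (‖v‖^2) • (2 • (innerSL ℝ v))) v :=
    (hF _ ha).comp_hasFDerivAt v hN
  have hg : HasGradientAt (fun w : EuclideanSpace ℝ (Fin d) => F (‖w‖^2))
      ((2 * F' (‖v‖^2)) • v) v := by
    rw [hasGradientAt_iff_hasFDerivAt]
    refine hc.congr_fderiv ?_
    ext y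
    simp [real_inner_smul_left]
    ring
  exact (hg.congr_of_eventuallyEq hf).gradient

lemma lap_total {d : ℕ} (F F' F'' : ℝ → ℝ)
    (hF : ∀ s, 0 < s → HasDerivAt F (F' s) s)
    (hF' : ∀ s, 0 < s → HasDerivAt F' (F'' s) s)
    (f : EuclideanSpace ℝ (Fin d) → ℝ) (v : EuclideanSpace ℝ (Fin d)) (hv : 0 < ‖v‖)
    (hf : ∀ᶠ w in nhds v, f w = F (‖w‖^2)) :
    euclideanLaplacian f v = F'' (‖v‖^2) * (4*‖v‖^2) + F' (‖v‖^2) * (2*d) := by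
  have ha : 0 < ‖v‖^2 := pow_pos hv 2
  have hterm : ∀ i : Fin d,
      iteratedDeriv 2 (fun t : ℝ => f (v + t • EuclideanSpace.single i 1)) 0
      = F'' (‖v‖^2) * (2*(v i))^2 + F' (‖v‖^2) * 2 := by
    intro i
    have hcont : Continuous (fun t : ℝ => v + t • EuclideanSpace.single i (1:ℝ)) := by
      fun_prop
    have hev : (fun t : ℝ => f (v + t • EuclideanSpace.single i 1)) =ᶠ[nhds (0:ℝ)]
        fun t => F (‖v + t • EuclideanSpace.single i (1:ℝ)‖^2) := by
      have h0 : v + (0:ℝ) • EuclideanSpace.single i (1:ℝ) = v := by simp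
      have := hcont.tendsto 0
      rw [h0] at this
      exact (this.eventually hf).mono fun t ht => ht
    rw [iteratedDeriv2_congr hev]
    have hfun : (fun t : ℝ => F (‖v + t • EuclideanSpace.single i (1:ℝ)‖^2))
        = fun t => F (‖v‖^2 + 2*(v i)*t + t^2) := by
      funext t; rw [norm_line_sq]
    rw [hfun]
    exact aux_deriv2 F F' F'' _ _ ha hF hF'
  unfold euclideanLaplacian
  rw [Finset.sum_congr rfl (fun i _ => hterm i), Finset.sum_add_distrib,
    Finset.sum_const, ← Finset.mul_sum]
  have hsum : ∑ i : Fin d, (2*(v i))^2 = 4*‖v‖^2 := by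
    have := sum_coord_sq v
    calc ∑ i : Fin d, (2*(v i))^2 = 4 * ∑ i : Fin d, (v i)^2 := by
          rw [Finset.mul_sum]; congr 1; funext i; ring
      _ = 4*‖v‖^2 := by rw [this]
  rw [hsum]
  simp [Finset.card_univ, nsmul_eq_mul]
  ring


set_option maxHeartbeats 1000000 in
theorem fokker_planck_defect_weight_asymptotics (d : ℕ) (hd : 0 < d)
    (γ κ β p : ℝ) (hγ : 1 ≤ γ) (hκ : 0 < κ) (hβ0 : 0 < β)
    (hβl : 2 - γ ≤ β) (hβu : β < γ) (hp1 : 1 ≤ p) (hp2 : p ≤ 2)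
    (φ : EuclideanSpace ℝ (Fin d) → ℝ)
    (hφ : ∀ v : EuclideanSpace ℝ (Fin d), 1 ≤ ‖v‖ → φ v = ‖v‖ ^ γ)
    (m : EuclideanSpace ℝ (Fin d) → ℝ)
    (hm : ∀ v, m v = Real.exp (κ * ‖v‖ ^ β))
    (ψ : EuclideanSpace ℝ (Fin d) → ℝ)
    (hψ : ∀ v, ψ v =
        (p - 1) * ‖gradient m v‖ ^ 2 / (m v) ^ 2 + euclideanLaplacian m v / m v
          + (1 - 1 / p) * euclideanLaplacian φ v
          - (inner ℝ (gradient φ v) (gradient m v) : ℝ) / m v) :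
    (2 - γ < β →
      Tendsto ψ (Bornology.cobounded (EuclideanSpace ℝ (Fin d))) atBot) ∧
    (β = 2 - γ →
      Filter.limsup ψ (Bornology.cobounded (EuclideanSpace ℝ (Fin d)))
        = -(κ * β * γ)) := by
  haveI : Nontrivial (EuclideanSpace ℝ (Fin d)) := by
    refine nontrivial_of_ne (EuclideanSpace.single ⟨0, hd⟩ (1:ℝ)) 0 fun h => ?_
    have := congrArg norm h
    simp [EuclideanSpace.norm_single] at this
  have hp0 : (0:ℝ) < p := lt_of_lt_of_le one_pos hp1
  have hγ0 : (0:ℝ) < γ := lt_of_lt_of_le one_pos hγ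
  set Ψ : ℝ → ℝ := fun a => p*κ^2*β^2*a^(β-1) + κ*β*(β+(d:ℝ)-2)*a^(β/2-1)
      + (1-1/p)*(γ*(γ+(d:ℝ)-2))*a^(γ/2-1) - κ*β*γ*a^((β+γ)/2-1) with hΨdef
  have key : ∀ v : EuclideanSpace ℝ (Fin d), 1 < ‖v‖ → ψ v = Ψ (‖v‖^2) := by
    intro v hv
    have hv0 : (0:ℝ) < ‖v‖ := lt_trans one_pos hv
    have ha : (0:ℝ) < ‖v‖^2 := pow_pos hv0 2
    have hmF : m =ᶠ[nhds v] fun w => Real.exp (κ * (‖w‖^2) ^ (β/2)) :=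
      Filter.Eventually.of_forall fun w => by
        show m w = Real.exp (κ * (‖w‖^2) ^ (β/2))
        rw [hm w, sq_rpow_half _ (norm_nonneg w)]
    have hopen : IsOpen {w : EuclideanSpace ℝ (Fin d) | 1 < ‖w‖} :=
      isOpen_lt continuous_const continuous_norm
    have hφF : φ =ᶠ[nhds v] fun w => (‖w‖^2) ^ (γ/2) := by
      refine Filter.eventuallyEq_of_mem (hopen.mem_nhds hv) fun w hw => ?_
      show φ w = (‖w‖^2) ^ (γ/2)
      rw [hφ w (le_of_lt hw), sq_rpow_half _ (norm_nonneg w)]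
    have hgm : gradient m v
        = (2 * (Real.exp (κ * (‖v‖^2) ^ (β/2)) * (κ * ((β/2) * (‖v‖^2) ^ (β/2-1))))) • v :=
      grad_eq _ _ (hasDerivAt_Fm κ β) m v hv0 hmF
    have hgφ : gradient φ v = (2 * ((γ/2) * (‖v‖^2) ^ (γ/2-1))) • v :=
      grad_eq _ _ (hasDerivAt_P (γ/2)) φ v hv0 hφF
    have hLm := lap_total _ _ _ (hasDerivAt_Fm κ β) (hasDerivAt_Fm' κ β) m v hv0 hmF
    have hLφ := lap_total _ _ _ (hasDerivAt_P (γ/2)) (hasDerivAt_P' (γ/2)) φ v hv0 hφF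
    have hmv : m v = Real.exp (κ * (‖v‖^2) ^ (β/2)) := by
      rw [hm v, sq_rpow_half _ (norm_nonneg v)]
    have hns : ∀ c : ℝ, ‖c • v‖^2 = c^2 * ‖v‖^2 := fun c => by
      rw [norm_smul, mul_pow, Real.norm_eq_abs, sq_abs]
    have hip : ∀ c1 c2 : ℝ, (inner ℝ (c1 • v) (c2 • v) : ℝ) = c1 * c2 * ‖v‖^2 := fun c1 c2 => by
      rw [real_inner_smul_left, real_inner_smul_right, real_inner_self_eq_norm_sq]; ring
    rw [hψ v, hgm, hgφ, hLm, hLφ, hmv, hns, hip, hΨdef]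
    simp only
    set a : ℝ := ‖v‖^2 with hadef
    have hE : Real.exp (κ * a ^ (β/2)) ≠ 0 := Real.exp_ne_zero _
    have e1 : a^(β-1) = a^(β/2-1)*a^(β/2-1)*a := by
      rw [← Real.rpow_add ha, ← Real.rpow_add_one ha.ne',
        show β/2-1+(β/2-1)+1 = β-1 by ring]
    have e4 : a^((β+γ)/2-1) = a^(γ/2-1)*a^(β/2-1)*a := by
      rw [← Real.rpow_add ha, ← Real.rpow_add_one ha.ne',
        show γ/2-1+(β/2-1)+1 = (β+γ)/2-1 by ring]
    have e2 : a^(β/2-1) = a^(β/2-2)*a := by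
      rw [← Real.rpow_add_one ha.ne', show β/2-2+1 = β/2-1 by ring]
    have e3 : a^(γ/2-1) = a^(γ/2-2)*a := by
      rw [← Real.rpow_add_one ha.ne', show γ/2-2+1 = γ/2-1 by ring]
    rw [e1, e4, e2, e3]
    field_simp
    ring
  have hcomp : Tendsto (fun v : EuclideanSpace ℝ (Fin d) => ‖v‖^2)
      (Bornology.cobounded _) atTop :=
    (tendsto_pow_atTop (two_ne_zero)).comp tendsto_norm_cobounded_atTop
  have hev : ψ =ᶠ[Bornology.cobounded (EuclideanSpace ℝ (Fin d))]
      fun v => Ψ (‖v‖^2) :=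
    (tendsto_norm_cobounded_atTop.eventually (eventually_gt_atTop 1)).mono
      fun v hv => key v hv
  constructor
  · intro hcase
    have he : 0 < (β+γ)/2 - 1 := by linarith
    set g : ℝ → ℝ := fun x => p*κ^2*β^2*x^(-((γ-β)/2)) + κ*β*(β+(d:ℝ)-2)*x^(-(γ/2))
        + (1-1/p)*(γ*(γ+(d:ℝ)-2))*x^(-(β/2)) - κ*β*γ with hgdef
    have hg : Tendsto g atTop
        (𝓝 (p*κ^2*β^2*0 + κ*β*(β+(d:ℝ)-2)*0 + (1-1/p)*(γ*(γ+(d:ℝ)-2))*0 - κ*β*γ)) := by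
      exact ((((tendsto_rpow_neg_atTop (by linarith)).const_mul _).add
        ((tendsto_rpow_neg_atTop (by linarith)).const_mul _)).add
        ((tendsto_rpow_neg_atTop (by linarith)).const_mul _)).sub_const _
    rw [show p*κ^2*β^2*0 + κ*β*(β+(d:ℝ)-2)*0 + (1-1/p)*(γ*(γ+(d:ℝ)-2))*0 - κ*β*γ
        = -(κ*β*γ) by ring] at hg
    have hgneg : -(κ*β*γ) < 0 := by
      have : 0 < κ*β*γ := by positivity
      linarith
    have hmul : Tendsto (fun x : ℝ => x^((β+γ)/2-1) * g x) atTop atBot :=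
      (tendsto_rpow_atTop he).atTop_mul_neg hgneg hg
    have hfeq : (fun x : ℝ => x^((β+γ)/2-1) * g x) =ᶠ[atTop] Ψ := by
      filter_upwards [eventually_gt_atTop (0:ℝ)] with x hx
      rw [hgdef, hΨdef]
      simp only
      rw [show β-1 = ((β+γ)/2-1) + (-((γ-β)/2)) by ring, Real.rpow_add hx,
        show β/2-1 = ((β+γ)/2-1) + (-(γ/2)) by ring, Real.rpow_add hx,
        show γ/2-1 = ((β+γ)/2-1) + (-(β/2)) by ring, Real.rpow_add hx]
      ring
    have hΨbot : Tendsto Ψ atTop atBot := hmul.congr' hfeq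
    exact Filter.Tendsto.congr' hev.symm (hΨbot.comp hcomp)
  · intro hcase
    have hγ1 : 1 < γ := by linarith
    have hγ2 : γ < 2 := by linarith
    have t1 : Tendsto (fun x : ℝ => x^(β-1)) atTop (𝓝 0) := by
      rw [show β-1 = -(γ-1) by rw [hcase]; ring]
      exact tendsto_rpow_neg_atTop (by linarith)
    have t2 : Tendsto (fun x : ℝ => x^(β/2-1)) atTop (𝓝 0) := by
      rw [show β/2-1 = -(γ/2) by rw [hcase]; ring]
      exact tendsto_rpow_neg_atTop (by linarith)
    have t3 : Tendsto (fun x : ℝ => x^(γ/2-1)) atTop (𝓝 0) := by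
      rw [show γ/2-1 = -(1-γ/2) by ring]
      exact tendsto_rpow_neg_atTop (by linarith)
    have hΨ' : Ψ = fun x : ℝ => p*κ^2*β^2*x^(β-1) + κ*β*(β+(d:ℝ)-2)*x^(β/2-1)
        + (1-1/p)*(γ*(γ+(d:ℝ)-2))*x^(γ/2-1) - κ*β*γ := by
      funext x
      rw [hΨdef]
      simp only
      rw [show (β+γ)/2-1 = 0 by rw [hcase]; ring, Real.rpow_zero, mul_one]
    have hΨt : Tendsto Ψ atTop
        (𝓝 (p*κ^2*β^2*0 + κ*β*(β+(d:ℝ)-2)*0 + (1-1/p)*(γ*(γ+(d:ℝ)-2))*0 - κ*β*γ)) := by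
      rw [hΨ']
      exact (((t1.const_mul _).add (t2.const_mul _)).add (t3.const_mul _)).sub_const _
    rw [show p*κ^2*β^2*0 + κ*β*(β+(d:ℝ)-2)*0 + (1-1/p)*(γ*(γ+(d:ℝ)-2))*0 - κ*β*γ
        = -(κ*β*γ) by ring] at hΨt
    have hlim : Tendsto ψ (Bornology.cobounded (EuclideanSpace ℝ (Fin d)))
        (𝓝 (-(κ*β*γ))) := Filter.Tendsto.congr' hev.symm (hΨt.comp hcomp)
    exact hlim.limsup_eq
end

section
/- Let E ⊂ 𝓔 be Banach spaces with E dense in 𝓔 and continuous embedding, and let 𝓛 = 𝓐 + 𝓑 be a closed operator on 𝓔 with restriction L to E. Assume: (i) (𝓑 - z)^{-1} exists and is uniformly bounded on 𝓑(𝓔) for Re z > a, with norm tending to 0 as Re z → ∞; (ii) 𝓐 ∈ 𝓑(𝓔); (iii) for some n ≥ 1, (𝓐(𝓑 - z)^{-1})^n is uniformly bounded from 𝓔 to E for Re z > a; (iv) (L - z)^{-1} exists and is bounded on E for Re z > a. Then for every z with Re z > a, (𝓛 - z) is invertible on 𝓔 and (𝓛 - z)^{-1} = Σ_{ℓ=0}^{n-1}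 (-1)^ℓ (𝓑 - z)^{-1}(𝓐(𝓑 - z)^{-1})^ℓ + (-1)^n (L - z)^{-1}(𝓐(𝓑 - z)^{-1})^n. -/
open Filter

/-- If `x` has two-sided inverse `s` and `y` is close enough to `x`, then `y` is a unit. -/
private lemma isUnit_of_near {R : Type*} [NormedRing R] [CompleteSpace R]
    (x s y : R) (h1 : x * s = 1) (h2 : s * x = 1)
    (h : ‖x - y‖ * (‖s‖ + 1) < 1) : IsUnit y := by
  have hs : ‖s * (x - y)‖ < 1 := by
    refine lt_of_le_of_lt (norm_mul_le _ _) ?_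
    nlinarith [norm_nonneg s, norm_nonneg (x - y)]
  have hx : IsUnit x := ⟨⟨x, s, h1, h2⟩, rfl⟩
  have hy : y = x * (1 - s * (x - y)) := by
    rw [mul_sub, mul_one, ← mul_assoc, h1, one_mul, sub_sub_cancel]
  rw [hy]
  exact hx.mul (isUnit_one_sub_of_norm_lt_one hs)

set_option maxHeartbeats 2000000 in
theorem resolvent_factorization
    {E 𝓔 : Type*}
    [NormedAddCommGroup E] [NormedSpace ℂ E] [CompleteSpace E]
    [NormedAddCommGroup 𝓔] [NormedSpace ℂ 𝓔] [CompleteSpace 𝓔]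
    (J : E →L[ℂ] 𝓔) (hJinj : Function.Injective J) (hJdense : DenseRange J)
    (𝓐 𝓑 : 𝓔 →L[ℂ] 𝓔) (L : E →L[ℂ] E)
    (hL : (𝓐 + 𝓑).comp J = J.comp L)
    (a : ℝ) (n : ℕ) (hn : 1 ≤ n)
    -- (i) the resolvent of 𝓑 exists and is uniformly bounded on {Re z > a},
    -- with norm tending to 0 as Re z → ∞
    (RB : ℂ → (𝓔 →L[ℂ] 𝓔))
    (hRB : ∀ z : ℂ, a < z.re →
      (𝓑 - z • ContinuousLinearMap.id ℂ 𝓔).comp (RB z) = ContinuousLinearMap.id ℂ 𝓔 ∧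
      (RB z).comp (𝓑 - z • ContinuousLinearMap.id ℂ 𝓔) = ContinuousLinearMap.id ℂ 𝓔)
    (C : ℝ) (hRBbdd : ∀ z : ℂ, a < z.re → ‖RB z‖ ≤ C)
    (hRBto0 : Tendsto (fun z : ℂ => ‖RB z‖) (Filter.comap Complex.re atTop) (nhds 0))
    -- (iii) (𝓐 ∘ RB z)^n factors through E, uniformly boundedly
    (T : ℂ → (𝓔 →L[ℂ] E))
    (hT : ∀ z : ℂ, a < z.re → J.comp (T z) = (𝓐.comp (RB z)) ^ n)
    (C' : ℝ) (hTbdd : ∀ z : ℂ, a < z.re → ‖T z‖ ≤ C')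
    -- (iv) the resolvent of L exists and is bounded on E for Re z > a
    (RL : ℂ → (E →L[ℂ] E))
    (hRL : ∀ z : ℂ, a < z.re →
      (L - z • ContinuousLinearMap.id ℂ E).comp (RL z) = ContinuousLinearMap.id ℂ E ∧
      (RL z).comp (L - z • ContinuousLinearMap.id ℂ E) = ContinuousLinearMap.id ℂ E) :
    -- conclusion: (𝓛 - z) is invertible with the factorized inverse
    ∀ z : ℂ, a < z.re →
      (((𝓐 + 𝓑) - z • ContinuousLinearMap.id ℂ 𝓔).comp
          ((∑ ℓ ∈ Finset.range n,
              ((-1 : ℂ) ^ ℓ) • ((RB z).comp ((𝓐.comp (RB z)) ^ ℓ)))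
            + ((-1 : ℂ) ^ n) • (J.comp ((RL z).comp (T z))))
        = ContinuousLinearMap.id ℂ 𝓔) ∧
      (((∑ ℓ ∈ Finset.range n,
              ((-1 : ℂ) ^ ℓ) • ((RB z).comp ((𝓐.comp (RB z)) ^ ℓ)))
            + ((-1 : ℂ) ^ n) • (J.comp ((RL z).comp (T z)))).comp
          ((𝓐 + 𝓑) - z • ContinuousLinearMap.id ℂ 𝓔)
        = ContinuousLinearMap.id ℂ 𝓔) := by
  intro z hz
  simp only [← ContinuousLinearMap.mul_def, ← ContinuousLinearMap.one_def] at hRB hRL hT ⊢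
  -- nonnegativity of the constants
  have ha1 : a < ((a + 1 : ℝ) : ℂ).re := by rw [Complex.ofReal_re]; exact lt_add_one a
  have hC0 : 0 ≤ C := (norm_nonneg _).trans (hRBbdd _ ha1)
  have hC'0 : 0 ≤ C' := (norm_nonneg _).trans (hTbdd _ ha1)
  -- Step 1: the series is always a right inverse.
  have h1 : ∀ w : ℂ, a < w.re →
      ((𝓐 + 𝓑) - w • (1 : 𝓔 →L[ℂ] 𝓔)) *
        ((∑ ℓ ∈ Finset.range n, ((-1 : ℂ) ^ ℓ) • (RB w * (𝓐 * RB w) ^ ℓ))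
          + ((-1 : ℂ) ^ n) • (J.comp ((RL w).comp (T w)))) = 1 := by
    intro w hw
    obtain ⟨hBR, hRBw⟩ := hRB w hw
    obtain ⟨hLR, hRLw⟩ := hRL w hw
    have hsplit : (𝓐 + 𝓑) - w • (1 : 𝓔 →L[ℂ] 𝓔) = 𝓐 + (𝓑 - w • 1) := add_sub_assoc ..
    rw [hsplit, mul_add, Finset.mul_sum]
    have hterm : ∀ ℓ ∈ Finset.range n,
        (𝓐 + (𝓑 - w • 1)) * (((-1 : ℂ) ^ ℓ) • (RB w * (𝓐 * RB w) ^ ℓ))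
          = (fun k => ((-1 : ℂ) ^ k) • (𝓐 * RB w) ^ k) ℓ
            - (fun k => ((-1 : ℂ) ^ k) • (𝓐 * RB w) ^ k) (ℓ + 1) := by
      intro ℓ _
      have hkey : (𝓐 + (𝓑 - w • 1)) * (RB w * (𝓐 * RB w) ^ ℓ)
          = (𝓐 * RB w) ^ (ℓ + 1) + (𝓐 * RB w) ^ ℓ := by
        rw [add_mul, ← mul_assoc, ← mul_assoc, hBR, one_mul, ← pow_succ']
      simp only
      rw [mul_smul_comm, hkey, pow_succ (-1 : ℂ), mul_neg_one, neg_smul, sub_neg_eq_add,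
        smul_add, add_comm]
    rw [Finset.sum_congr rfl hterm, Finset.sum_range_sub' (fun k => ((-1 : ℂ) ^ k) • (𝓐 * RB w) ^ k) n]
    have hJcomm : ((𝓐 + (𝓑 - w • 1)) : 𝓔 →L[ℂ] 𝓔).comp J
        = J.comp (L - w • (1 : E →L[ℂ] E)) := by
      rw [← hsplit, ContinuousLinearMap.sub_comp, hL, ContinuousLinearMap.comp_sub]
      congr 1
      ext x
      simp
    have h2nd : (𝓐 + (𝓑 - w • 1)) * (J.comp ((RL w).comp (T w))) = (𝓐 * RB w) ^ n := by
      rw [ContinuousLinearMap.mul_def, ← ContinuousLinearMap.comp_assoc, hJcomm,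
        ContinuousLinearMap.comp_assoc, ← ContinuousLinearMap.comp_assoc (L - w • 1) (RL w) (T w),
        ← ContinuousLinearMap.mul_def, hLR, ContinuousLinearMap.one_def,
        ContinuousLinearMap.id_comp, hT w hw]
    rw [mul_smul_comm, h2nd]
    simp
  -- Step 2: a norm bound for the series, in terms of a bound for `RL`.
  have hSbound : ∀ w : ℂ, a < w.re → ∀ m : ℝ, ‖RL w‖ ≤ m →
      ‖(∑ ℓ ∈ Finset.range n, ((-1 : ℂ) ^ ℓ) • (RB w * (𝓐 * RB w) ^ ℓ))
          + ((-1 : ℂ) ^ n) • (J.comp ((RL w).comp (T w)))‖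
        ≤ (∑ ℓ ∈ Finset.range n, C * (‖𝓐‖ * C) ^ ℓ) + ‖J‖ * (m * C') := by
    intro w hw m hm
    have hMle : ‖𝓐 * RB w‖ ≤ ‖𝓐‖ * C := by
      refine (norm_mul_le _ _).trans ?_
      exact mul_le_mul_of_nonneg_left (hRBbdd w hw) (norm_nonneg _)
    have hpow : ∀ ℓ : ℕ, ‖(𝓐 * RB w) ^ ℓ‖ ≤ (‖𝓐‖ * C) ^ ℓ := by
      intro ℓ
      induction ℓ with
      | zero => simp only [pow_zero]; exact ContinuousLinearMap.norm_id_le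
      | succ k ih =>
        rw [pow_succ, pow_succ]
        exact (norm_mul_le _ _).trans
          (mul_le_mul ih hMle (norm_nonneg _)
            (pow_nonneg (mul_nonneg (norm_nonneg _) hC0) _))
    refine (norm_add_le _ _).trans (add_le_add ?_ ?_)
    · refine (norm_sum_le _ _).trans (Finset.sum_le_sum fun ℓ _ => ?_)
      rw [norm_smul ((-1 : ℂ) ^ ℓ) (RB w * (𝓐 * RB w) ^ ℓ)]
      have hone : ‖(-1 : ℂ) ^ ℓ‖ = 1 := by simp
      rw [hone, one_mul]
      refine (norm_mul_le _ _).trans ?_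
      exact mul_le_mul (hRBbdd w hw) (hpow ℓ) (norm_nonneg _) hC0
    · rw [norm_smul ((-1 : ℂ) ^ n) (J.comp ((RL w).comp (T w)))]
      have hone : ‖(-1 : ℂ) ^ n‖ = 1 := by simp
      rw [hone, one_mul]
      refine (ContinuousLinearMap.opNorm_comp_le _ _).trans ?_
      refine mul_le_mul_of_nonneg_left ?_ (norm_nonneg J)
      refine (ContinuousLinearMap.opNorm_comp_le _ _).trans ?_
      exact mul_le_mul hm (hTbdd w hw) (norm_nonneg _) ((norm_nonneg _).trans hm)
  -- Step 3: local boundedness of `RL` (resolvent identity / Neumann series).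
  have hRLloc : ∀ w : ℂ, a < w.re → ∀ w' : ℂ, a < w'.re →
      ‖w' - w‖ * (‖RL w‖ + 1) ≤ 1 / 2 → ‖RL w'‖ ≤ 2 * (‖RL w‖ + 1) := by
    intro w hw w' hw' hsmall
    obtain ⟨hLRw, hRLw⟩ := hRL w hw
    obtain ⟨hLRw', hRLw'⟩ := hRL w' hw'
    set t : E →L[ℂ] E := (w' - w) • RL w with ht
    have htn : ‖t‖ ≤ 1 / 2 := by
      rw [ht, norm_smul (w' - w) (RL w)]
      refine le_trans ?_ hsmall
      have : ‖RL w‖ ≤ ‖RL w‖ + 1 := by linarith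
      exact mul_le_mul_of_nonneg_left this (norm_nonneg _)
    have htlt : ‖t‖ < 1 := lt_of_le_of_lt htn (by norm_num)
    have hfac : L - w' • (1 : E →L[ℂ] E) = (L - w • (1 : E →L[ℂ] E)) * (1 - t) := by
      have haux : (L - w • (1 : E →L[ℂ] E)) * t = (w' - w) • (1 : E →L[ℂ] E) := by
        rw [ht, mul_smul_comm, hLRw]
      rw [mul_sub, mul_one, haux, sub_smul]
      abel
    have hgt : (1 - t) * (∑' k : ℕ, t ^ k) = 1 := mul_neg_geom_series t htlt
    have htg : (∑' k : ℕ, t ^ k) * (1 - t) = 1 := geom_series_mul_neg t htlt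
    have hXr : (L - w' • (1 : E →L[ℂ] E)) * ((∑' k : ℕ, t ^ k) * RL w) = 1 := by
      rw [hfac, mul_assoc, ← mul_assoc (1 - t), hgt, one_mul, hLRw]
    have huniq : RL w' = (∑' k : ℕ, t ^ k) * RL w := by
      calc RL w' = RL w' * ((L - w' • (1 : E →L[ℂ] E)) * ((∑' k : ℕ, t ^ k) * RL w)) := by
            rw [hXr, mul_one]
        _ = (RL w' * (L - w' • (1 : E →L[ℂ] E))) * ((∑' k : ℕ, t ^ k) * RL w) :=
            (mul_assoc _ _ _).symm
        _ = (∑' k : ℕ, t ^ k) * RL w := by rw [hRLw', one_mul]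
    have hgnorm : ‖∑' k : ℕ, t ^ k‖ ≤ 2 := by
      refine (tsum_geometric_le_of_norm_lt_one t htlt).trans ?_
      have hone : ‖(1 : E →L[ℂ] E)‖ ≤ 1 := ContinuousLinearMap.norm_id_le
      have hinv : (1 - ‖t‖)⁻¹ ≤ 2 := by
        rw [show (2 : ℝ) = ((1:ℝ)/2)⁻¹ by norm_num]
        exact inv_anti₀ (by norm_num) (by linarith)
      linarith
    rw [huniq]
    refine (norm_mul_le _ _).trans ?_
    have h2 : ‖∑' k : ℕ, t ^ k‖ * ‖RL w‖ ≤ 2 * ‖RL w‖ :=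
      mul_le_mul_of_nonneg_right hgnorm (norm_nonneg _)
    linarith
  -- Step 4: invertibility everywhere on the half-plane, by connectedness.
  have hunit : ∀ w : ℂ, a < w.re → IsUnit ((𝓐 + 𝓑) - w • (1 : 𝓔 →L[ℂ] 𝓔)) := by
    set Ω : Set ℂ := {w | a < w.re} with hΩdef
    set V : Set ℂ := {w | IsUnit ((𝓐 + 𝓑) - w • (1 : 𝓔 →L[ℂ] 𝓔))} with hVdef
    suffices hΩV : Ω ⊆ V by exact fun w hw => hΩV hw
    have hΩopen : IsOpen Ω := isOpen_Ioi.preimage Complex.continuous_re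
    have hΩconn : IsPreconnected Ω := (convex_halfSpace_re_gt a).isPreconnected
    have hVopen : IsOpen V := by
      have hcont : Continuous fun w : ℂ => (𝓐 + 𝓑) - w • (1 : 𝓔 →L[ℂ] 𝓔) :=
        continuous_const.sub (continuous_id.smul continuous_const)
      exact Units.isOpen.preimage hcont
    -- around any non-invertible point in Ω there is a ball with no invertible points
    have hbad : ∀ w ∈ Ω \ V, ∃ r : ℝ, 0 < r ∧ Metric.ball w r ⊆ Ω ∧ Metric.ball w r ∩ V = ∅ := by
      rintro w ⟨hwΩ, hwV⟩
      obtain ⟨rΩ, hrΩ0, hrΩ⟩ := Metric.isOpen_iff.mp hΩopen w hwΩ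
      set K : ℝ := (∑ ℓ ∈ Finset.range n, C * (‖𝓐‖ * C) ^ ℓ)
        + ‖J‖ * ((2 * (‖RL w‖ + 1)) * C') with hKdef
      have hK0 : 0 ≤ K := by
        refine add_nonneg (Finset.sum_nonneg fun ℓ _ =>
          mul_nonneg hC0 (pow_nonneg (mul_nonneg (norm_nonneg _) hC0) _)) ?_
        refine mul_nonneg (norm_nonneg _) (mul_nonneg ?_ hC'0)
        positivity
      have hK1 : 0 < K + 1 := by linarith
      refine ⟨min (min rΩ (1 / 2 * (‖RL w‖ + 1)⁻¹)) (K + 1)⁻¹, ?_, ?_, ?_⟩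
      · have h1 : 0 < 1 / 2 * (‖RL w‖ + 1)⁻¹ := by positivity
        exact lt_min (lt_min hrΩ0 h1) (inv_pos.mpr hK1)
      · exact (Metric.ball_subset_ball (le_trans (min_le_left _ _) (min_le_left _ _))).trans hrΩ
      · rw [Set.eq_empty_iff_forall_notMem]
        rintro w' ⟨hw'ball, hw'V⟩
        have hw'Ω : a < w'.re := by
          have : w' ∈ Ω :=
            ((Metric.ball_subset_ball (le_trans (min_le_left _ _) (min_le_left _ _))).trans hrΩ)
              hw'ball
          exact this
        have hdist : ‖w' - w‖ < min (min rΩ (1 / 2 * (‖RL w‖ + 1)⁻¹)) (K + 1)⁻¹ :=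
          mem_ball_iff_norm.mp hw'ball
        have hd1 : ‖w' - w‖ ≤ 1 / 2 * (‖RL w‖ + 1)⁻¹ :=
          le_of_lt (lt_of_lt_of_le hdist (le_trans (min_le_left _ _) (min_le_right _ _)))
        have hd2 : ‖w' - w‖ < (K + 1)⁻¹ := lt_of_lt_of_le hdist (min_le_right _ _)
        have hpos : (0 : ℝ) < ‖RL w‖ + 1 := by positivity
        have hRL' : ‖RL w'‖ ≤ 2 * (‖RL w‖ + 1) := by
          refine hRLloc w hwΩ w' hw'Ω ?_
          calc ‖w' - w‖ * (‖RL w‖ + 1) ≤ (1 / 2 * (‖RL w‖ + 1)⁻¹) * (‖RL w‖ + 1) :=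
                mul_le_mul_of_nonneg_right hd1 (le_of_lt hpos)
            _ = 1 / 2 := by field_simp
        -- the right inverse at w' is the genuine inverse
        obtain ⟨u', hu'⟩ := hw'V
        have hr' := h1 w' hw'Ω
        set Sw' : 𝓔 →L[ℂ] 𝓔 :=
          (∑ ℓ ∈ Finset.range n, ((-1 : ℂ) ^ ℓ) • (RB w' * (𝓐 * RB w') ^ ℓ))
            + ((-1 : ℂ) ^ n) • (J.comp ((RL w').comp (T w'))) with hSw'
        have hSeq : Sw' = ↑u'⁻¹ := by
          calc Sw' = 1 * Sw' := (one_mul _).symm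
            _ = (↑u'⁻¹ * ↑u') * Sw' := by rw [u'.inv_mul]
            _ = ↑u'⁻¹ * (↑u' * Sw') := mul_assoc _ _ _
            _ = ↑u'⁻¹ := by rw [hu', hr', mul_one]
        have hl' : Sw' * ((𝓐 + 𝓑) - w' • (1 : 𝓔 →L[ℂ] 𝓔)) = 1 := by
          rw [hSeq, ← hu', u'.inv_mul]
        have hSb : ‖Sw'‖ ≤ K := by
          rw [hKdef]
          exact hSbound w' hw'Ω (2 * (‖RL w‖ + 1)) hRL'
        -- perturbation: w is then also invertible, contradiction
        have hdiff : ((𝓐 + 𝓑) - w' • (1 : 𝓔 →L[ℂ] 𝓔)) - ((𝓐 + 𝓑) - w • (1 : 𝓔 →L[ℂ] 𝓔))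
            = (w - w') • (1 : 𝓔 →L[ℂ] 𝓔) := by
          rw [sub_smul]; abel
        have hdn : ‖((𝓐 + 𝓑) - w' • (1 : 𝓔 →L[ℂ] 𝓔)) - ((𝓐 + 𝓑) - w • (1 : 𝓔 →L[ℂ] 𝓔))‖
            ≤ ‖w' - w‖ := by
          rw [hdiff, norm_smul (w - w') (1 : 𝓔 →L[ℂ] 𝓔), ← norm_sub_rev w']
          have hone : ‖(1 : 𝓔 →L[ℂ] 𝓔)‖ ≤ 1 := ContinuousLinearMap.norm_id_le
          nlinarith [norm_nonneg (w' - w)]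
        have hcontra : IsUnit ((𝓐 + 𝓑) - w • (1 : 𝓔 →L[ℂ] 𝓔)) := by
          refine isUnit_of_near _ Sw' _ hr' hl' ?_
          calc ‖((𝓐 + 𝓑) - w' • (1 : 𝓔 →L[ℂ] 𝓔)) - ((𝓐 + 𝓑) - w • (1 : 𝓔 →L[ℂ] 𝓔))‖ * (‖Sw'‖ + 1)
              ≤ ‖w' - w‖ * (K + 1) := by
                refine mul_le_mul hdn (by linarith) (by positivity) (norm_nonneg _)
            _ < (K + 1)⁻¹ * (K + 1) := mul_lt_mul_of_pos_right hd2 hK1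
            _ = 1 := inv_mul_cancel₀ (ne_of_gt hK1)
        exact hwV hcontra
    choose! r hr0 hrΩ' hrV using hbad
    set W : Set ℂ := ⋃ (w : ℂ) (_ : w ∈ Ω \ V), Metric.ball w (r w) with hWdef
    have hWopen : IsOpen W := isOpen_biUnion fun w _ => Metric.isOpen_ball
    have hdisj : Disjoint V W := by
      rw [Set.disjoint_left]
      intro x hxV hxW
      obtain ⟨w, hw, hx⟩ := Set.mem_iUnion₂.mp hxW
      have : x ∈ Metric.ball w (r w) ∩ V := ⟨hx, hxV⟩
      rw [hrV w hw] at this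
      exact this
    have hcover : Ω ⊆ V ∪ W := by
      intro w hw
      by_cases hwV : w ∈ V
      · exact Or.inl hwV
      · refine Or.inr (Set.mem_iUnion₂.mpr ⟨w, ⟨hw, hwV⟩, ?_⟩)
        exact Metric.mem_ball_self (hr0 w ⟨hw, hwV⟩)
    -- a far-away invertible point
    have hne : (Ω ∩ V).Nonempty := by
      have hε : (0 : ℝ) < (‖𝓐‖ + 1)⁻¹ := by positivity
      have hev : ∀ᶠ w : ℂ in comap Complex.re atTop, ‖RB w‖ < (‖𝓐‖ + 1)⁻¹ := by
        have := hRBto0.eventually (eventually_lt_nhds hε)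
        exact this
      obtain ⟨s, hs, hsub⟩ := Filter.mem_comap.mp hev
      obtain ⟨M, hM⟩ := mem_atTop_sets.mp hs
      set w₀ : ℂ := ((max M (a + 1) : ℝ) : ℂ) with hw₀def
      have hw₀re : w₀.re = max M (a + 1) := Complex.ofReal_re _
      have hw₀Ω : a < w₀.re := by
        rw [hw₀re]
        exact lt_of_lt_of_le (lt_add_one a) (le_max_right _ _)
      have hw₀RB : ‖RB w₀‖ < (‖𝓐‖ + 1)⁻¹ := by
        apply hsub
        simp only [Set.mem_preimage, hw₀re]
        exact hM _ (le_max_left _ _)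
      refine ⟨w₀, hw₀Ω, ?_⟩
      obtain ⟨hBR, hRBw⟩ := hRB w₀ hw₀Ω
      have hBunit : IsUnit (𝓑 - w₀ • (1 : 𝓔 →L[ℂ] 𝓔)) :=
        ⟨⟨𝓑 - w₀ • (1 : 𝓔 →L[ℂ] 𝓔), RB w₀, hBR, hRBw⟩, rfl⟩
      have hNunit : IsUnit (1 + 𝓐 * RB w₀) := by
        have : (1 : 𝓔 →L[ℂ] 𝓔) + 𝓐 * RB w₀ = 1 - (-(𝓐 * RB w₀)) := by rw [sub_neg_eq_add]
        rw [this]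
        refine isUnit_one_sub_of_norm_lt_one ?_
        rw [norm_neg]
        calc ‖𝓐 * RB w₀‖ ≤ ‖𝓐‖ * ‖RB w₀‖ := norm_mul_le _ _
          _ ≤ (‖𝓐‖ + 1) * ‖RB w₀‖ := by nlinarith [norm_nonneg (RB w₀)]
          _ < (‖𝓐‖ + 1) * (‖𝓐‖ + 1)⁻¹ := by
              refine mul_lt_mul_of_pos_left hw₀RB ?_
              positivity
          _ = 1 := mul_inv_cancel₀ (by positivity)
      have hfact : (𝓐 + 𝓑) - w₀ • (1 : 𝓔 →L[ℂ] 𝓔)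
          = (1 + 𝓐 * RB w₀) * (𝓑 - w₀ • (1 : 𝓔 →L[ℂ] 𝓔)) := by
        rw [add_mul, one_mul, mul_assoc, hRBw, mul_one, add_sub_assoc, add_comm]
      show IsUnit ((𝓐 + 𝓑) - w₀ • (1 : 𝓔 →L[ℂ] 𝓔))
      rw [hfact]
      exact hNunit.mul hBunit
    exact hΩconn.subset_left_of_subset_union hVopen hWopen hdisj hcover hne
  -- Step 5: conclusion at z.
  obtain ⟨u, hu⟩ := hunit z hz
  have hr := h1 z hz
  set Sz : 𝓔 →L[ℂ] 𝓔 :=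
    (∑ ℓ ∈ Finset.range n, ((-1 : ℂ) ^ ℓ) • (RB z * (𝓐 * RB z) ^ ℓ))
      + ((-1 : ℂ) ^ n) • (J.comp ((RL z).comp (T z))) with hSz
  have hSeq : Sz = ↑u⁻¹ := by
    calc Sz = 1 * Sz := (one_mul _).symm
      _ = (↑u⁻¹ * ↑u) * Sz := by rw [u.inv_mul]
      _ = ↑u⁻¹ * (↑u * Sz) := mul_assoc _ _ _
      _ = ↑u⁻¹ := by rw [hu, hr, mul_one]
  have hl : Sz * ((𝓐 + 𝓑) - z • (1 : 𝓔 →L[ℂ] 𝓔)) = 1 := by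
    rw [hSeq, ← hu, u.inv_mul]
  exact ⟨hr, hl⟩
end

section
/- Let 𝓛 = 𝓐 + 𝓑 be as above with assumptions (i)–(iv) of the factorization theorem, and suppose that in the second variant L - ξ is injective on E for some ξ with Re ξ > a. If f ∈ 𝓔 satisfies (𝓛 - ξ) f = 0, and if (𝓐(𝓑-ξ)^{-1})^n maps 𝓔 into E while (𝓑-ξ)^{-1} maps E into Dom(L) ⊂ E, then f = 0. In particular the null space of (𝓛 - ξ) in 𝓔 coincides with the null space of (L - ξ) in E. -/
theorem injectivity_transfer
    {E 𝓔 : Type*}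
    [NormedAddCommGroup E] [NormedSpace ℂ E] [CompleteSpace E]
    [NormedAddCommGroup 𝓔] [NormedSpace ℂ 𝓔] [CompleteSpace 𝓔]
    (J : E →L[ℂ] 𝓔) (hJinj : Function.Injective J)
    (𝓐 𝓑 : 𝓔 →L[ℂ] 𝓔) (ξ : ℂ) (n : ℕ) (hn : 1 ≤ n)
    (RB : 𝓔 →L[ℂ] 𝓔)
    (hRB1 : (𝓑 - ξ • ContinuousLinearMap.id ℂ 𝓔).comp RB = ContinuousLinearMap.id ℂ 𝓔)
    (hRB2 : RB.comp (𝓑 - ξ • ContinuousLinearMap.id ℂ 𝓔) = ContinuousLinearMap.id ℂ 𝓔)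
    -- (𝓐 (𝓑 - ξ)⁻¹)ⁿ maps 𝓔 into E
    (T : 𝓔 →L[ℂ] E) (hT : J.comp T = (𝓐.comp RB) ^ n)
    -- (𝓑 - ξ)⁻¹ maps E into Dom(L) ⊂ E
    (hRBE : ∀ g : E, ∃ g' : E, RB (J g) = J g')
    -- L - ξ is injective on E
    (hLinj : ∀ g : E, (𝓐 + 𝓑) (J g) = ξ • (J g) → g = 0) :
    ∀ f : 𝓔, (𝓐 + 𝓑) f = ξ • f → f = 0 := by
  intro f hf
  set G := 𝓐.comp RB with hG
  set fb := (𝓑 - ξ • ContinuousLinearMap.id ℂ 𝓔) f with hfb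
  have hRBfb : RB fb = f := by
    rw [hfb, ← ContinuousLinearMap.comp_apply, hRB2]; rfl
  have hAf : 𝓐 f = -fb := by
    have : 𝓐 f + 𝓑 f = ξ • f := by simpa using hf
    simp only [hfb, ContinuousLinearMap.sub_apply, ContinuousLinearMap.smul_apply,
      ContinuousLinearMap.id_apply]
    linear_combination (norm := abel) this
  have hGfb : G fb = -fb := by
    simp [hG, hRBfb, hAf]
  have key : ∀ k : ℕ, fb = ((-1 : ℂ) ^ k) • ((G ^ k) fb) := by
    intro k
    induction k with
    | zero => simp
    | succ k ih =>
      have hpow : (G ^ (k + 1)) fb = -((G ^ k) fb) := by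
        have : (G ^ (k + 1)) fb = (G ^ k) (G fb) := by
          rw [pow_succ]; rfl
        rw [this, hGfb, map_neg]
      rw [hpow, pow_succ]
      simpa using ih
  have hfb_eq : fb = J (((-1 : ℂ) ^ n) • T fb) := by
    have h1 := key n
    have h2 : (G ^ n) fb = J (T fb) := by
      have := congrArg (fun S => S fb) hT
      simpa [hG] using this.symm
    rw [map_smul, ← h2]; exact h1
  obtain ⟨g', hg'⟩ := hRBE (((-1 : ℂ) ^ n) • T fb)
  have hfJ : f = J g' := by
    rw [← hRBfb, hfb_eq]
    exact hg'
  have : g' = 0 := by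
    apply hLinj
    rw [← hfJ]; exact hf
  rw [hfJ, this, map_zero]
end
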